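/- Let n be a positive integer and let S₂ be an infinite set of rational primes satisfying lim_{x→∞} θ_{S₂}(x)/x = 1/n. Let p_k denote the k-th smallest prime in S₂ and set d_k = p₁·p₂·⋯·p_k. Then for all sufficiently large k one has p_{k+1} < 2n·log d_k, and consequently for every sufficiently large natural number x there exists a prime p ∈ S₂ such that p does not divide x and p < 2n·log x. -/

import Mathlib

open scoped Classical
set_option maxHeartbeats 1000000

/-- `primesLogSum S x` is `θ_S(x) = ∑_{p ∈ S, p ≤ x} log p`. -/
noncomputable def primesLogSum (S : Set ℕ) (x : ℝ) : ℝ :=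
  ∑ p ∈ (Finset.range (⌊x⌋₊ + 1)).filter (fun p => p.Prime ∧ p ∈ S), Real.log p

lemma aux_filter_range_nth_eq_image (p : ℕ → Prop) [DecidablePred p]
    (hp : (setOf p).Infinite) (k : ℕ) :
    (Finset.range (Nat.nth p k)).filter p = (Finset.range k).image (Nat.nth p) := by
  induction k with
  | zero =>
    simp only [Finset.range_zero, Finset.image_empty]
    rw [Finset.filter_eq_empty_iff]
    intro m hm
    rw [Finset.mem_range, Nat.nth_zero] at hm
    exact fun hpm => (Nat.lt_of_succ_le hm).not_ge (Nat.sInf_le hpm)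
  | succ k ih =>
    rw [Nat.filter_range_nth_eq_insert_of_infinite hp k, ih, Finset.range_add_one,
      Finset.image_insert]

/-- If `S₂` is an infinite set of primes with `θ_{S₂}(x)/x → 1/n`, then (writing `p_{k+1}`
for the `k`-th prime of `S₂` in increasing 0-indexed enumeration `Nat.nth`, and
`d_k = p₁⋯p_k`) for all sufficiently large `k` we have `p_{k+1} < 2n·log d_k`; consequently
every sufficiently large natural number `x` admits a prime `p ∈ S₂` with `p ∤ x` and
`p < 2n·log x`. -/
theorem nth_prime_lt_of_theta_density
    (n : ℕ) (hn : 0 < n) (S₂ : Set ℕ) (hprime : ∀ p ∈ S₂, p.Prime) (hinf : S₂.Infinite)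
    (h : Filter.Tendsto (fun x : ℝ => primesLogSum S₂ x / x) Filter.atTop (nhds (1 / n))) :
    (∀ᶠ k : ℕ in Filter.atTop,
      (Nat.nth (· ∈ S₂) k : ℝ) <
        2 * n * Real.log (∏ i ∈ Finset.range k, (Nat.nth (· ∈ S₂) i : ℝ))) ∧
    (∀ᶠ x : ℕ in Filter.atTop,
      ∃ p ∈ S₂, ¬ p ∣ x ∧ (p : ℝ) < 2 * n * Real.log x) := by
  have hinf' : (setOf (· ∈ S₂)).Infinite := hinf
  set P : ℕ → Prop := (· ∈ S₂) with hP
  set L : ℕ → ℝ := fun k => ∑ i ∈ Finset.range k, Real.log (Nat.nth P i) with hLdef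
  have hmem : ∀ i, Nat.nth P i ∈ S₂ := fun i => Nat.nth_mem_of_infinite hinf' i
  have hpr : ∀ i, (Nat.nth P i).Prime := fun i => hprime _ (hmem i)
  have h2le : ∀ i, 2 ≤ Nat.nth P i := fun i => (hpr i).two_le
  have hn1 : (1 : ℝ) ≤ (n : ℝ) := by exact_mod_cast hn
  -- θ at the point (nth k) - 1 equals L k
  have hθ : ∀ k, primesLogSum S₂ ((Nat.nth P k : ℝ) - 1) = L k := by
    intro k
    have h1le : 1 ≤ Nat.nth P k := le_trans (by norm_num) (h2le k)
    have h1 : ((Nat.nth P k : ℝ) - 1) = ((Nat.nth P k - 1 : ℕ) : ℝ) := by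
      push_cast [Nat.cast_sub h1le]; ring
    rw [primesLogSum, h1, Nat.floor_natCast]
    have h2 : Nat.nth P k - 1 + 1 = Nat.nth P k := by omega
    rw [h2]
    have h3 : (Finset.range (Nat.nth P k)).filter (fun p => p.Prime ∧ p ∈ S₂)
        = (Finset.range (Nat.nth P k)).filter P := by
      apply Finset.filter_congr
      intro m _
      exact ⟨fun hm => hm.2, fun hm => ⟨hprime m hm, hm⟩⟩
    rw [h3, aux_filter_range_nth_eq_image P hinf' k,
      Finset.sum_image (fun a _ b _ hab => Nat.nth_injective hinf' hab)]
  -- (nth k) - 1 → ∞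
  have htend1 : Filter.Tendsto (fun k : ℕ => (Nat.nth P k : ℝ) - 1) Filter.atTop Filter.atTop := by
    apply Filter.tendsto_atTop_mono (fun k => ?_)
      (Filter.tendsto_atTop_add_const_right _ (-1) tendsto_natCast_atTop_atTop)
    have : k ≤ Nat.nth P k := (Nat.nth_strictMono hinf').le_apply
    have : (k : ℝ) ≤ (Nat.nth P k : ℝ) := by exact_mod_cast this
    linarith
  have hcomp : Filter.Tendsto (fun k : ℕ => L k / ((Nat.nth P k : ℝ) - 1))
      Filter.atTop (nhds (1 / n)) := by
    have := h.comp htend1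
    refine this.congr fun k => ?_
    simp only [Function.comp_apply, hθ]
  have hev1 : ∀ᶠ k : ℕ in Filter.atTop, 3 / (4 * (n : ℝ)) < L k / ((Nat.nth P k : ℝ) - 1) := by
    apply hcomp.eventually (eventually_gt_nhds ?_)
    rw [div_lt_div_iff₀ (by positivity) (by positivity)]
    nlinarith
  have hLtop : Filter.Tendsto L Filter.atTop Filter.atTop := by
    apply Filter.tendsto_atTop_mono (fun k => ?_)
      ((tendsto_natCast_atTop_atTop).atTop_mul_const (Real.log_pos one_lt_two))
    calc (k : ℝ) * Real.log 2 = ∑ _i ∈ Finset.range k, Real.log 2 := by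
          simp [mul_comm]
      _ ≤ L k := Finset.sum_le_sum fun i _ =>
          Real.log_le_log (by norm_num) (by exact_mod_cast h2le i)
  have hev2 : ∀ᶠ k : ℕ in Filter.atTop, (3 : ℝ) ≤ L k := hLtop.eventually_ge_atTop 3
  have part1 : ∀ᶠ k : ℕ in Filter.atTop,
      (Nat.nth P k : ℝ) < 2 * n * Real.log (∏ i ∈ Finset.range k, (Nat.nth P i : ℝ)) := by
    filter_upwards [hev1, hev2] with k h1 h2
    rw [Real.log_prod (fun i _ => by
      have := h2le i; positivity)]
    have hx2 : (2 : ℝ) ≤ (Nat.nth P k : ℝ) := by exact_mod_cast h2le k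
    have h1' : 3 * ((Nat.nth P k : ℝ) - 1) < 4 * n * L k := by
      rw [div_lt_div_iff₀ (by positivity) (by linarith)] at h1
      linarith
    have h3 : (3 : ℝ) ≤ n * L k := by nlinarith
    show (Nat.nth P k : ℝ) < 2 * n * L k
    nlinarith
  refine ⟨part1, ?_⟩
  obtain ⟨K, hK⟩ := Filter.eventually_atTop.mp part1
  set d : ℕ → ℕ := fun k => ∏ i ∈ Finset.range k, Nat.nth P i with hd
  have hdpos : ∀ k, 0 < d k := fun k => Finset.prod_pos fun i _ => by have := h2le i; omega
  have hdmono : Monotone d := by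
    apply monotone_nat_of_le_succ
    intro k
    rw [hd]
    simp only [Finset.prod_range_succ]
    exact Nat.le_mul_of_pos_right _ (by have := h2le k; omega)
  have hdlb : ∀ k, 2 ^ k ≤ d k := fun k => by
    calc 2 ^ k = ∏ _i ∈ Finset.range k, 2 := by simp
      _ ≤ d k := Finset.prod_le_prod' fun i _ => h2le i
  rw [Filter.eventually_atTop]
  refine ⟨d K, fun x hx => ?_⟩
  have hxpos : 0 < x := lt_of_lt_of_le (hdpos K) hx
  have hex : ∃ j, x < d j := ⟨x, lt_of_lt_of_le (Nat.lt_two_pow_self) (hdlb x)⟩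
  have hm := Nat.find_spec hex
  have hm0 : Nat.find hex ≠ 0 := by
    intro h0
    rw [h0] at hm
    simp only [hd, Finset.range_zero, Finset.prod_empty] at hm
    omega
  obtain ⟨k, hk⟩ : ∃ k, Nat.find hex = k + 1 := ⟨Nat.find hex - 1, by omega⟩
  have hdk : d k ≤ x := not_lt.mp (Nat.find_min hex (by omega))
  rw [hk] at hm
  have hKk : K ≤ k := by
    by_contra hc
    push_neg at hc
    exact absurd (le_trans (hdmono (by omega : k + 1 ≤ K)) hx) (not_le.mpr hm)
  have hnotall : ∃ i < k + 1, ¬ Nat.nth P i ∣ x := by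
    by_contra hc
    push_neg at hc
    have hdvd : d (k + 1) ∣ x := by
      have himg : ∏ p ∈ (Finset.range (k + 1)).image (Nat.nth P), p
          = ∏ i ∈ Finset.range (k + 1), Nat.nth P i :=
        Finset.prod_image fun a _ b _ hab => Nat.nth_injective hinf' hab
      rw [hd]
      show (∏ i ∈ Finset.range (k + 1), Nat.nth P i) ∣ x
      rw [← himg]
      refine Finset.prod_primes_dvd x ?_ ?_
      · intro p hp
        obtain ⟨i, _, rfl⟩ := Finset.mem_image.mp hp
        exact (hpr i).prime
      · intro p hp
        obtain ⟨i, hi, rfl⟩ := Finset.mem_image.mp hp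
        exact hc i (Finset.mem_range.mp hi)
    exact absurd (Nat.le_of_dvd hxpos hdvd) (not_le.mpr hm)
  obtain ⟨i, hik, hnd⟩ := hnotall
  refine ⟨Nat.nth P i, hmem i, hnd, ?_⟩
  have h1 : (Nat.nth P i : ℝ) ≤ (Nat.nth P k : ℝ) := by
    exact_mod_cast (Nat.nth_monotone hinf' (by omega : i ≤ k))
  have h2 := hK k hKk
  have h3 : (∏ j ∈ Finset.range k, (Nat.nth P j : ℝ)) = ((d k : ℕ) : ℝ) := by
    rw [hd]; push_cast; rfl
  rw [h3] at h2
  have h4 : Real.log ((d k : ℕ) : ℝ) ≤ Real.log (x : ℝ) := by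
    apply Real.log_le_log (by exact_mod_cast hdpos k)
    exact_mod_cast hdk
  calc (Nat.nth P i : ℝ) ≤ (Nat.nth P k : ℝ) := h1
    _ < 2 * n * Real.log ((d k : ℕ) : ℝ) := h2
    _ ≤ 2 * n * Real.log (x : ℝ) := by
        apply mul_le_mul_of_nonneg_left h4 (by positivity)
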